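/- (Lemma 1) Let γ₁ ∈ [0,1], γ₂ ∈ [0,1], τ ∈ ℝ. Let ĥ₁, ĥ₂, t₂ : ℝ → ℂ be eventually nonzero and satisfy |ĥ₁(P)|² ≐ P^{γ₁−1} and |ĥ₂(P)|² ≐ P^{γ₂−1}, and define t₁(P) := −ĥ₁(P)·(|ĥ₁(P)|² + P^{−1})^{−1}·conj(ĥ₂(P))·t₂(P). If the total power satisfies |t₁(P)|² + |t₂(P)|² ≐ P^{τ}, then |t₁(P)|² ≐ P^{τ−(γ₁−γ₂)⁺} and |t₂(P)|² ≐ P^{τ−(γ₂−γ₁)⁺}, where (x)⁺ := max(x,0). -/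

import Mathlib

open Filter

/-- `ExpEq f β`: exponential equality `f(P) ≐ P^β`. -/
def ExpEq (f : ℝ → ℝ) (β : ℝ) : Prop :=
  Tendsto (fun P : ℝ => Real.log (f P) / Real.log P) atTop (nhds β)

/-- The AP-ZF active coefficient:
`t₁(P) = -e₁(P) (|e₁(P)|² + P⁻¹)⁻¹ conj(e₂(P)) t₂(P)`. -/
noncomputable def apzfActive (e₁ e₂ t₂ : ℝ → ℂ) : ℝ → ℂ := fun P =>
  -e₁ P * (((‖e₁ P‖ ^ 2 + P⁻¹ : ℝ) : ℂ))⁻¹ * (starRingEnd ℂ) (e₂ P) * t₂ P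

lemma expEq_congr {f g : ℝ → ℝ} {α : ℝ} (h : f =ᶠ[atTop] g) (hf : ExpEq f α) :
    ExpEq g α := by
  apply hf.congr'
  filter_upwards [h] with P hP
  rw [hP]

lemma expEq_mul {f g : ℝ → ℝ} {α β : ℝ}
    (hf : ∀ᶠ P in atTop, 0 < f P) (hg : ∀ᶠ P in atTop, 0 < g P)
    (h1 : ExpEq f α) (h2 : ExpEq g β) :
    ExpEq (fun P => f P * g P) (α + β) := by
  have := h1.add h2
  apply this.congr'
  filter_upwards [hf, hg] with P hfP hgP
  rw [Real.log_mul hfP.ne' hgP.ne', add_div]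

lemma expEq_inv {f : ℝ → ℝ} {α : ℝ} (h : ExpEq f α) :
    ExpEq (fun P => (f P)⁻¹) (-α) := by
  have := h.neg
  apply this.congr'
  filter_upwards with P
  rw [Real.log_inv, neg_div]

lemma expEq_add {f g : ℝ → ℝ} {α β : ℝ}
    (hf : ∀ᶠ P in atTop, 0 < f P) (hg : ∀ᶠ P in atTop, 0 < g P)
    (h1 : ExpEq f α) (h2 : ExpEq g β) :
    ExpEq (fun P => f P + g P) (max α β) := by
  have hmax : Tendsto (fun P => max (Real.log (f P) / Real.log P) (Real.log (g P) / Real.log P))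
      atTop (nhds (max α β)) := h1.max h2
  have hlog2 : Tendsto (fun P : ℝ => Real.log 2 / Real.log P) atTop (nhds 0) :=
    tendsto_const_nhds.div_atTop Real.tendsto_log_atTop
  have hup := hlog2.add hmax
  rw [zero_add] at hup
  apply tendsto_of_tendsto_of_tendsto_of_le_of_le' hmax hup
  · filter_upwards [hf, hg, eventually_gt_atTop (1:ℝ)] with P hfP hgP hP1
    have hlP : 0 < Real.log P := Real.log_pos hP1
    apply max_le
    · exact div_le_div_of_nonneg_right (Real.log_le_log hfP (by linarith)) hlP.le
    · exact div_le_div_of_nonneg_right (Real.log_le_log hgP (by linarith)) hlP.le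
  · filter_upwards [hf, hg, eventually_gt_atTop (1:ℝ)] with P hfP hgP hP1
    have hlP : 0 < Real.log P := Real.log_pos hP1
    have hle : f P + g P ≤ 2 * max (f P) (g P) := by
      rcases le_total (f P) (g P) with h | h
      · rw [max_eq_right h]; linarith
      · rw [max_eq_left h]; linarith
    have hmpos : 0 < max (f P) (g P) := lt_max_of_lt_left hfP
    have : Real.log (f P + g P) ≤ Real.log 2 + Real.log (max (f P) (g P)) := by
      rw [← Real.log_mul (by norm_num) hmpos.ne']
      exact Real.log_le_log (by linarith) hle
    have h2 : Real.log (f P + g P) / Real.log P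
        ≤ (Real.log 2 + Real.log (max (f P) (g P))) / Real.log P :=
      div_le_div_of_nonneg_right this hlP.le
    rw [add_div] at h2
    refine h2.trans (add_le_add_right ?_ _)
    rcases le_total (f P) (g P) with h | h
    · rw [max_eq_right h]; exact le_max_right _ _
    · rw [max_eq_left h]; exact le_max_left _ _

/-- Lemma 1: power splitting of the AP-ZF precoder under total power `P^τ`:
`|t₁(P)|² ≐ P^{τ-(γ₁-γ₂)⁺}` and `|t₂(P)|² ≐ P^{τ-(γ₂-γ₁)⁺}`. -/
theorem apzf_power_split (γ₁ γ₂ τ : ℝ)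
    (hγ₁ : γ₁ ∈ Set.Icc (0 : ℝ) 1) (hγ₂ : γ₂ ∈ Set.Icc (0 : ℝ) 1)
    (e₁ e₂ t₂ : ℝ → ℂ)
    (hne₁ : ∀ᶠ P in atTop, e₁ P ≠ 0) (hne₂ : ∀ᶠ P in atTop, e₂ P ≠ 0)
    (hnt₂ : ∀ᶠ P in atTop, t₂ P ≠ 0)
    (h1 : ExpEq (fun P => ‖e₁ P‖ ^ 2) (γ₁ - 1))
    (h2 : ExpEq (fun P => ‖e₂ P‖ ^ 2) (γ₂ - 1))
    (htot : ExpEq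
      (fun P => ‖apzfActive e₁ e₂ t₂ P‖ ^ 2 + ‖t₂ P‖ ^ 2) τ) :
    ExpEq (fun P => ‖apzfActive e₁ e₂ t₂ P‖ ^ 2) (τ - max (γ₁ - γ₂) 0) ∧
    ExpEq (fun P => ‖t₂ P‖ ^ 2) (τ - max (γ₂ - γ₁) 0) := by
  set a : ℝ → ℝ := fun P => ‖e₁ P‖ ^ 2 with ha
  set b : ℝ → ℝ := fun P => ‖e₂ P‖ ^ 2 with hb
  set s : ℝ → ℝ := fun P => ‖t₂ P‖ ^ 2 with hs
  set d : ℝ → ℝ := fun P => a P + P⁻¹ with hd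
  set c : ℝ → ℝ := fun P => a P * ((d P)⁻¹ * (d P)⁻¹) * b P with hc
  have hP1 : ∀ᶠ P in atTop, (1:ℝ) < P := eventually_gt_atTop 1
  have hapos : ∀ᶠ P in atTop, 0 < a P := by
    filter_upwards [hne₁] with P h
    exact pow_pos (norm_pos_iff.mpr h) 2
  have hbpos : ∀ᶠ P in atTop, 0 < b P := by
    filter_upwards [hne₂] with P h
    exact pow_pos (norm_pos_iff.mpr h) 2
  have hspos : ∀ᶠ P in atTop, 0 < s P := by
    filter_upwards [hnt₂] with P h
    exact pow_pos (norm_pos_iff.mpr h) 2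
  have hdpos : ∀ᶠ P in atTop, 0 < d P := by
    filter_upwards [hapos, hP1] with P h h1
    have : (0:ℝ) < P⁻¹ := inv_pos.mpr (by linarith)
    simp only [hd]; positivity
  have hcpos : ∀ᶠ P in atTop, 0 < c P := by
    filter_upwards [hapos, hbpos, hdpos] with P h1 h2 h3
    have := inv_pos.mpr h3
    simp only [hc]; positivity
  -- pointwise factorization of |t₁|²
  have hkey : ∀ᶠ P in atTop, ‖apzfActive e₁ e₂ t₂ P‖ ^ 2 = c P * s P := by
    filter_upwards [hdpos] with P hdP
    simp only [apzfActive, hc, hs, ha, hb, hd, norm_mul, norm_neg, norm_inv,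
      Complex.norm_conj, Complex.norm_real, Real.norm_eq_abs]
    rw [abs_of_pos hdP]
    ring
  -- exponent of P⁻¹ is -1
  have hinvP : ExpEq (fun P : ℝ => P⁻¹) (-1) := by
    refine Tendsto.congr' ?_ (tendsto_const_nhds (x := (-1:ℝ)))
    filter_upwards [hP1] with P h
    rw [Real.log_inv, neg_div, div_self (Real.log_pos h).ne']
  have hPpos : ∀ᶠ P in atTop, (0:ℝ) < P⁻¹ := by
    filter_upwards [hP1] with P h; exact inv_pos.mpr (by linarith)
  -- exponent of d
  have hdE : ExpEq d (γ₁ - 1) := by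
    have := expEq_add hapos hPpos h1 hinvP
    have hm : max (γ₁ - 1) (-1 : ℝ) = γ₁ - 1 := max_eq_left (by linarith [hγ₁.1])
    rw [hm] at this
    exact this
  -- exponent of c
  have hcE : ExpEq c (γ₂ - γ₁) := by
    have hi : ExpEq (fun P => (d P)⁻¹) (-(γ₁ - 1)) := expEq_inv hdE
    have hii : ExpEq (fun P => (d P)⁻¹ * (d P)⁻¹) (-(γ₁ - 1) + -(γ₁ - 1)) := by
      have hp : ∀ᶠ P in atTop, 0 < (d P)⁻¹ := by
        filter_upwards [hdpos] with P h; exact inv_pos.mpr h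
      exact expEq_mul hp hp hi hi
    have hadpos : ∀ᶠ P in atTop, 0 < a P * ((d P)⁻¹ * (d P)⁻¹) := by
      filter_upwards [hapos, hdpos] with P h h'
      have := inv_pos.mpr h'
      positivity
    have hddpos : ∀ᶠ P in atTop, 0 < (d P)⁻¹ * (d P)⁻¹ := by
      filter_upwards [hdpos] with P h
      have := inv_pos.mpr h
      positivity
    have h3 := expEq_mul hadpos hbpos (expEq_mul hapos hddpos h1 hii) h2
    have : γ₁ - 1 + (-(γ₁ - 1) + -(γ₁ - 1)) + (γ₂ - 1) = γ₂ - γ₁ := by ring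
    rw [this] at h3
    exact h3
  -- one + c
  have h1c : ExpEq (fun P => c P + 1) (max (γ₂ - γ₁) 0) := by
    have hone : ExpEq (fun _ : ℝ => (1:ℝ)) 0 := by
      have : (fun P : ℝ => Real.log 1 / Real.log P) = fun _ => (0:ℝ) := by
        funext P; simp
      unfold ExpEq; rw [this]; exact tendsto_const_nhds
    exact expEq_add hcpos (Eventually.of_forall fun _ => one_pos) hcE hone
  have h1cpos : ∀ᶠ P in atTop, 0 < c P + 1 := by
    filter_upwards [hcpos] with P h; linarith
  -- total = (c+1) * s
  have htot' : ExpEq (fun P => (c P + 1) * s P) τ := by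
    apply expEq_congr _ htot
    filter_upwards [hkey] with P h
    rw [h]; ring
  -- exponent of s
  have hsE : ExpEq s (τ - max (γ₂ - γ₁) 0) := by
    have := expEq_mul (by
        filter_upwards [h1cpos] with P h; exact inv_pos.mpr h)
      (by filter_upwards [h1cpos, hspos] with P h h'; exact mul_pos h h')
      (expEq_inv h1c) htot'
    have heq : -(max (γ₂ - γ₁) 0) + τ = τ - max (γ₂ - γ₁) 0 := by ring
    rw [heq] at this
    apply expEq_congr _ this
    filter_upwards [h1cpos] with P h
    field_simp
  -- exponent of |t₁|²
  have ht1E : ExpEq (fun P => ‖apzfActive e₁ e₂ t₂ P‖ ^ 2)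
      (τ - max (γ₁ - γ₂) 0) := by
    have := expEq_mul hcpos hspos hcE hsE
    have heq : γ₂ - γ₁ + (τ - max (γ₂ - γ₁) 0) = τ - max (γ₁ - γ₂) 0 := by
      rcases le_total γ₁ γ₂ with h | h
      · rw [max_eq_left (by linarith), max_eq_right (by linarith)]; ring
      · rw [max_eq_right (by linarith), max_eq_left (by linarith)]; ring
    rw [heq] at this
    refine expEq_congr ?_ this
    filter_upwards [hkey] with P h
    exact h.symm
  exact ⟨ht1E, hsE⟩
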